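/- For every real number x with 0 < x < 1, we have - ∑_{k=1}^{∞} (φ(k)/k) · log(1 - x^k) = x/(1 - x). -/

import Mathlib

open Real

theorem totient_log_series (x : ℝ) (hx0 : 0 < x) (hx1 : x < 1) :
    -∑' k : ℕ, ((Nat.totient (k + 1) : ℝ) / (k + 1 : ℝ)) * Real.log (1 - x ^ (k + 1))
      = x / (1 - x) := by
  have hx1' : (0:ℝ) < 1 - x := by linarith
  set F : ℕ × ℕ → ℝ := fun p => (Nat.totient p.1 : ℝ) / ((p.1 * p.2 : ℕ) : ℝ) * x ^ (p.1 * p.2)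
    with hF
  set r : ℕ → ℝ := fun k => (Nat.totient k : ℝ) / (k : ℝ) * (-Real.log (1 - x ^ k)) with hr
  have hr0 : r 0 = 0 := by simp [hr]
  -- powers of x are in (0,1)
  have hxk0 : ∀ k : ℕ, 0 < x ^ k := fun k => pow_pos hx0 k
  have hxk1 : ∀ k : ℕ, x ^ (k + 1) < 1 := fun k => pow_lt_one₀ hx0.le hx1 (Nat.succ_ne_zero k)
  have hxkle : ∀ k : ℕ, x ^ k ≤ 1 := fun k => pow_le_one₀ hx0.le hx1.le
  -- each row has the claimed sum
  have hrow : ∀ k : ℕ, HasSum (fun m => F (k, m)) (r k) := by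
    intro k
    rcases k with - | k
    · have : (fun m => F (0, m)) = fun _ => (0:ℝ) := by
        funext m; simp [hF]
      rw [this, hr0]; exact hasSum_zero
    · have habs : |x ^ (k + 1)| < 1 := by
        rw [abs_of_pos (hxk0 (k+1))]; exact hxk1 k
      have h := (Real.hasSum_pow_div_log_of_abs_lt_one habs).mul_left
        ((Nat.totient (k+1) : ℝ) / ((k+1 : ℕ) : ℝ))
      have h0 : ∀ m : ℕ, F (k+1, m+1)
          = (Nat.totient (k+1) : ℝ) / ((k+1 : ℕ) : ℝ) * ((x ^ (k+1)) ^ (m+1) / ((m:ℝ)+1)) := by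
        intro m
        simp only [hF, ← pow_mul]
        have hk : ((k:ℝ)+1) ≠ 0 := by positivity
        have hm : ((m:ℝ)+1) ≠ 0 := by positivity
        push_cast
        field_simp
        try ring
      have h1 : HasSum (fun m => F (k+1, m+1)) (r (k+1)) := by
        rw [hr]
        simp only [h0]
        exact h
      refine (hasSum_nat_add_iff' (f := fun m => F (k+1, m)) (g := r (k+1)) 1).mp ?_
      have hF0 : F (k+1, 0) = 0 := by simp [hF]
      simpa [hF0] using h1
  -- nonnegativity of F
  have hFnn : ∀ p : ℕ × ℕ, 0 ≤ F p := by
    intro p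
    apply mul_nonneg (div_nonneg (by positivity) (by positivity)) (pow_nonneg hx0.le _)
  -- bound on r and summability
  have hrnn : ∀ k, 0 ≤ r k := fun k => (hrow k).nonneg (fun m => hFnn _)
  have hrle : ∀ k, r k ≤ x ^ k / (1 - x) := by
    intro k
    rcases k with - | k
    · rw [hr0]; positivity
    · have h1 : (Nat.totient (k+1) : ℝ) / ((k+1 : ℕ) : ℝ) ≤ 1 := by
        rw [div_le_one (by positivity)]
        exact_mod_cast Nat.totient_le (k+1)
      have h2 : 0 < 1 - x ^ (k+1) := by linarith [hxk1 k]
      have h3 : -Real.log (1 - x ^ (k+1)) ≤ x ^ (k+1) / (1 - x) := by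
        have := Real.log_le_sub_one_of_pos (inv_pos.mpr h2)
        rw [Real.log_inv] at this
        have h4 : (1 - x ^ (k+1))⁻¹ - 1 = x ^ (k+1) / (1 - x ^ (k+1)) := by
          field_simp
          ring
        rw [h4] at this
        refine this.trans ?_
        apply div_le_div_of_nonneg_left (hxk0 _).le hx1'
        have : x ^ (k+1) ≤ x := by
          calc x ^ (k+1) = x * x ^ k := by ring
          _ ≤ x * 1 := by nlinarith [hxkle k, hxk0 k]
          _ = x := mul_one x
        linarith
      calc r (k+1) ≤ 1 * (-Real.log (1 - x ^ (k+1))) := by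
            apply mul_le_mul_of_nonneg_right h1
            rw [neg_nonneg]
            exact Real.log_nonpos (by linarith [hxk0 (k+1)]) (by linarith [hxk0 (k+1)])
        _ = -Real.log (1 - x ^ (k+1)) := one_mul _
        _ ≤ x ^ (k+1) / (1 - x) := h3
  have hrsum : Summable r :=
    Summable.of_nonneg_of_le hrnn hrle
      ((summable_geometric_of_lt_one hx0.le hx1).div_const (1 - x))
  -- F is summable
  have hFsum : Summable F := by
    rw [summable_prod_of_nonneg hFnn]
    refine ⟨fun k => (hrow k).summable, ?_⟩
    have : (fun k => ∑' m, F (k, m)) = r := funext fun k => (hrow k).tsum_eq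
    rw [this]; exact hrsum
  set S := ∑' p, F p with hS
  have hFS : HasSum F S := hFsum.hasSum
  -- fiberwise over n = k * m
  have hfib : HasSum (fun c : ℕ => ∑' p : (fun p : ℕ × ℕ => p.1 * p.2) ⁻¹' {c}, F p) S :=
    hFS.tsum_fiberwise _
  -- compute the fiber sums
  have hfib0 : (∑' p : (fun p : ℕ × ℕ => p.1 * p.2) ⁻¹' {0}, F p.val) = 0 := by
    have : ∀ p : (fun p : ℕ × ℕ => p.1 * p.2) ⁻¹' {0}, F p.val = 0 := by
      rintro ⟨⟨a, b⟩, hp⟩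
      simp only [Set.mem_preimage, Set.mem_singleton_iff] at hp
      rcases Nat.mul_eq_zero.mp hp with h | h <;> simp [hF, h, hp]
    simp only [this, tsum_zero]
  have hfibn : ∀ n : ℕ, (∑' p : (fun p : ℕ × ℕ => p.1 * p.2) ⁻¹' {n+1}, F p.val) = x ^ (n+1) := by
    intro n
    rw [show (fun p : ℕ × ℕ => p.1 * p.2) ⁻¹' {n+1} = ((n+1 : ℕ).divisorsAntidiagonal : Set (ℕ × ℕ))
        by ext p; simp [Nat.mem_divisorsAntidiagonal],
      Finset.tsum_subtype' (n+1 : ℕ).divisorsAntidiagonal F]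
    have step : ∀ p ∈ (n+1 : ℕ).divisorsAntidiagonal,
        F p = (Nat.totient p.1 : ℝ) * (x ^ (n+1) / ((n+1 : ℕ) : ℝ)) := by
      intro p hp
      have hp1 := (Nat.mem_divisorsAntidiagonal.mp hp).1
      simp only [hF, hp1]
      ring
    rw [Finset.sum_congr rfl step, ← Finset.sum_mul]
    have : (∑ p ∈ (n+1 : ℕ).divisorsAntidiagonal, (Nat.totient p.1 : ℝ)) = ((n+1 : ℕ) : ℝ) := by
      rw [← Nat.cast_sum]
      norm_cast
      rw [Nat.sum_divisorsAntidiagonal (fun a _ => Nat.totient a)]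
      exact Nat.sum_totient (n+1)
    rw [this]
    field_simp
  -- the geometric series
  have hgeom : HasSum (fun c : ℕ => if c = 0 then (0:ℝ) else x ^ c) (x / (1 - x)) := by
    rw [← hasSum_nat_add_iff' (f := fun c : ℕ => if c = 0 then (0:ℝ) else x ^ c) 1]
    have h5 : (fun n : ℕ => if n + 1 = 0 then (0:ℝ) else x ^ (n+1)) = fun n => x * x ^ n := by
      funext n; simp [pow_succ, mul_comm]
    simp only [h5, Finset.range_one, Finset.sum_singleton, if_pos rfl, sub_zero]
    have := (hasSum_geometric_of_lt_one hx0.le hx1).mul_left x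
    simpa [div_eq_mul_inv] using this
  -- identify the two sums
  have hSval : S = x / (1 - x) := by
    have heq : (fun c : ℕ => ∑' p : (fun p : ℕ × ℕ => p.1 * p.2) ⁻¹' {c}, F p)
        = fun c : ℕ => if c = 0 then (0:ℝ) else x ^ c := by
      funext c
      rcases c with - | n
      · simpa using hfib0
      · simpa using hfibn n
    rw [heq] at hfib
    exact hfib.unique hgeom
  -- assemble
  have hrS : HasSum r S := hFS.prod_fiberwise hrow
  have hrS' : HasSum (fun k => r (k+1)) S := by
    have := (hasSum_nat_add_iff' (f := r) 1).mpr hrS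
    simpa [hr0] using this
  have hfin : HasSum
      (fun k : ℕ => ((Nat.totient (k + 1) : ℝ) / (k + 1 : ℝ)) * Real.log (1 - x ^ (k + 1))) (-S) := by
    have := hrS'.neg
    convert this using 2 with k
    · rfl
    rw [hr]
    push_cast
    ring
  rw [hfin.tsum_eq, neg_neg, hSval]
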